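/- arXiv:1812.03276 — 3 statements merged into one kernel-verified Lean document; each statement's English description precedes it below -/
import Mathlib

section
/- Let G be a Lie group with multiplication m, 𝔤 its Lie algebra, and Z: G → 𝔤 a smooth 1-cocycle for the adjoint representation (Z(g₁g₂) = Ad_{g₁}Z(g₂) + Z(g₁)). Let F_ε be the flow of the vector field →Z(g) = dR_g(Z(g)) on G. Then whenever defined, each F_ε is a group homomorphism: F_ε(g₁g₂) = F_ε(g₁)F_ε(g₂). -/
open Manifold

variable {E F : Type*} [NormedAddCommGroup E] [NormedSpace ℝ E]
  [NormedAddCommGroup F] [NormedSpace ℝ F]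
  {G : Type*} [TopologicalSpace G] [ChartedSpace E G] [Group G] [LieGroup 𝓘(ℝ, E) (⊤ : ℕ∞) G]
  {H : Type*} [TopologicalSpace H] [ChartedSpace F H] [Group H] [LieGroup 𝓘(ℝ, F) (⊤ : ℕ∞) H]

/-- The adjoint representation of `G` on `𝔤 = T₁G ≃ E`. -/
noncomputable def Ad (g : G) : E →L[ℝ] E :=
  mfderiv 𝓘(ℝ, E) 𝓘(ℝ, E) (fun x => g * x * g⁻¹) (1 : G)

section AuxLemmas

open Set Bundle

private lemma mdiff_mul (p : G × G) :
    MDifferentiableAt (𝓘(ℝ, E).prod 𝓘(ℝ, E)) 𝓘(ℝ, E) (fun p : G × G => p.1 * p.2) p :=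
  (contMDiff_mul (I := 𝓘(ℝ, E)) (n := ((⊤ : ℕ∞) : WithTop ℕ∞)) (G := G)).mdifferentiableAt (by simp)

private lemma mdiff_R (g a : G) : MDifferentiableAt 𝓘(ℝ, E) 𝓘(ℝ, E) (fun x : G => x * g) a :=
  (contMDiff_mul_right (G := G) (I := 𝓘(ℝ, E)) (n := ((⊤ : ℕ∞) : WithTop ℕ∞))).mdifferentiableAt (by simp)

private lemma mdiff_L (g b : G) : MDifferentiableAt 𝓘(ℝ, E) 𝓘(ℝ, E) (fun y : G => g * y) b :=
  (contMDiff_mul_left (G := G) (I := 𝓘(ℝ, E)) (n := ((⊤ : ℕ∞) : WithTop ℕ∞))).mdifferentiableAt (by simp)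

private lemma mdiff_conj (g a : G) :
    MDifferentiableAt 𝓘(ℝ, E) 𝓘(ℝ, E) (fun x : G => g * x * g⁻¹) a := by
  have : (fun x : G => g * x * g⁻¹) = (fun y : G => y * g⁻¹) ∘ (fun x : G => g * x) := rfl
  rw [this]
  exact (mdiff_R g⁻¹ (g * a)).comp a (mdiff_L g a)

private lemma mfderiv_point_congr {f : G → G} {x y : G} (h : x = y) (u : E) :
    mfderiv 𝓘(ℝ, E) 𝓘(ℝ, E) f x u = mfderiv 𝓘(ℝ, E) 𝓘(ℝ, E) f y u := by subst h; rfl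

private lemma mfderiv_fun_congr {f g : G → G} (h : f = g) (x : G) (u : E) :
    mfderiv 𝓘(ℝ, E) 𝓘(ℝ, E) f x u = mfderiv 𝓘(ℝ, E) 𝓘(ℝ, E) g x u := by subst h; rfl

/-- Partial-derivative decomposition of the derivative of multiplication. -/
private lemma Dmul_apply (a b : G) (u v : E) :
    mfderiv (𝓘(ℝ, E).prod 𝓘(ℝ, E)) 𝓘(ℝ, E) (fun p : G × G => p.1 * p.2) (a, b) (u, v) =
      mfderiv 𝓘(ℝ, E) 𝓘(ℝ, E) (fun x : G => x * b) a u +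
      mfderiv 𝓘(ℝ, E) 𝓘(ℝ, E) (fun y : G => a * y) b v :=
  mfderiv_prod_eq_add_apply (mdiff_mul (a, b))

/-- Chain rule for right translations: `dR_b(a) ∘ dR_a(1) = dR_{ab}(1)`. -/
private lemma rho_comp (a b : G) (u : E) :
    mfderiv 𝓘(ℝ, E) 𝓘(ℝ, E) (fun x : G => x * b) a
      (mfderiv 𝓘(ℝ, E) 𝓘(ℝ, E) (fun x : G => x * a) (1 : G) u) =
    mfderiv 𝓘(ℝ, E) 𝓘(ℝ, E) (fun x : G => x * (a * b)) (1 : G) u := by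
  have h := mfderiv_comp_of_eq (I' := 𝓘(ℝ, E)) (x := (1 : G)) (y := a)
    (mdiff_R b a) (mdiff_R a 1) (one_mul a)
  have hfun : ((fun x : G => x * b) ∘ fun x : G => x * a) = fun x : G => x * (a * b) := by
    funext x; simp [Function.comp, mul_assoc]
  rw [hfun] at h
  have happ := DFunLike.congr_fun h u
  exact (mfderiv_point_congr (one_mul a).symm _).trans happ.symm

/-- `dL_a(b) ∘ dR_b(1) = dR_{ab}(1) ∘ Ad_a`. -/
private lemma lam_comp (a b : G) (u w : E) (hw : Ad a u = w) :
    mfderiv 𝓘(ℝ, E) 𝓘(ℝ, E) (fun y : G => a * y) b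
      (mfderiv 𝓘(ℝ, E) 𝓘(ℝ, E) (fun x : G => x * b) (1 : G) u) =
    mfderiv 𝓘(ℝ, E) 𝓘(ℝ, E) (fun x : G => x * (a * b)) (1 : G) w := by
  have h1 := mfderiv_comp_of_eq (I' := 𝓘(ℝ, E)) (x := (1 : G)) (y := b)
    (mdiff_L a b) (mdiff_R b 1) (one_mul b)
  have h2 := mfderiv_comp_of_eq (I' := 𝓘(ℝ, E)) (x := (1 : G)) (y := (1 : G))
    (mdiff_R (a * b) 1) (mdiff_conj a 1) (by group)
  have hfun : ((fun y : G => a * y) ∘ fun x : G => x * b) =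
      (fun x : G => x * (a * b)) ∘ (fun x : G => a * x * a⁻¹) := by
    funext x; simp only [Function.comp]; group
  have happ1 := DFunLike.congr_fun h1 u
  have happ2 := DFunLike.congr_fun h2 u
  have s1 : mfderiv 𝓘(ℝ, E) 𝓘(ℝ, E) (fun y : G => a * y) b
      (mfderiv 𝓘(ℝ, E) 𝓘(ℝ, E) (fun x : G => x * b) (1 : G) u) =
      mfderiv 𝓘(ℝ, E) 𝓘(ℝ, E) (fun y : G => a * y) ((1 : G) * b)
      (mfderiv 𝓘(ℝ, E) 𝓘(ℝ, E) (fun x : G => x * b) (1 : G) u) :=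
    mfderiv_point_congr (one_mul b).symm _
  have s3 : mfderiv 𝓘(ℝ, E) 𝓘(ℝ, E) (fun x : G => x * (a * b)) (a * 1 * a⁻¹)
      (mfderiv 𝓘(ℝ, E) 𝓘(ℝ, E) (fun x : G => a * x * a⁻¹) (1 : G) u) =
      mfderiv 𝓘(ℝ, E) 𝓘(ℝ, E) (fun x : G => x * (a * b)) (1 : G)
      (mfderiv 𝓘(ℝ, E) 𝓘(ℝ, E) (fun x : G => a * x * a⁻¹) (1 : G) u) :=
    mfderiv_point_congr (by group) _
  have s4 : mfderiv 𝓘(ℝ, E) 𝓘(ℝ, E) (fun x : G => a * x * a⁻¹) (1 : G) u = w := hw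
  have main := (((s1.trans happ1.symm).trans (mfderiv_fun_congr hfun (1 : G) u)).trans
    happ2).trans s3
  rw [s4] at main
  exact main

/-- The key vector identity: `dm_{(a,b)}(dR_a Z(a), dR_b Z(b)) = dR_{ab} Z(ab)`. -/
private lemma key_vec (Z : G → E) (hZcoc : ∀ g₁ g₂ : G, Z (g₁ * g₂) = Ad g₁ (Z g₂) + Z g₁)
    (a b : G) :
    mfderiv (𝓘(ℝ, E).prod 𝓘(ℝ, E)) 𝓘(ℝ, E) (fun p : G × G => p.1 * p.2) (a, b)
      (mfderiv 𝓘(ℝ, E) 𝓘(ℝ, E) (fun x : G => x * a) (1 : G) (Z a),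
       mfderiv 𝓘(ℝ, E) 𝓘(ℝ, E) (fun x : G => x * b) (1 : G) (Z b)) =
    mfderiv 𝓘(ℝ, E) 𝓘(ℝ, E) (fun x : G => x * (a * b)) (1 : G) (Z (a * b)) := by
  erw [Dmul_apply, rho_comp, lam_comp a b (Z b) (Ad a (Z b)) rfl, hZcoc a b,
    ContinuousLinearMap.map_add]
  exact add_comm _ _

/-- The right-translated vector field `g ↦ dR_g(Z g)` is a `C¹` section of the
tangent bundle when `Z` is smooth. -/
private lemma section_smooth (Z : G → E) (hZ : ContMDiff 𝓘(ℝ, E) 𝓘(ℝ, E) (⊤ : ℕ∞) Z) :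
    ContMDiff 𝓘(ℝ, E) 𝓘(ℝ, E).tangent 1
      (fun g => (⟨g, mfderiv 𝓘(ℝ, E) 𝓘(ℝ, E) (fun x => x * g) (1 : G) (Z g)⟩ :
        TangentBundle 𝓘(ℝ, E) G)) := by
  intro g₀
  refine (Bundle.contMDiffAt_section g₀).2 ?_
  have hsm := ContMDiffAt.mfderiv_apply (m := 1) (n := ((⊤ : ℕ∞) : WithTop ℕ∞)) (x₀ := g₀)
      (fun (g : G) (x : G) => x * g) (fun _ => (1 : G)) id Z
      (((contMDiff_mul (I := 𝓘(ℝ, E)) (n := ((⊤ : ℕ∞) : WithTop ℕ∞)) (G := G)).comp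
        (contMDiff_snd.prodMk contMDiff_fst)).contMDiffAt)
      contMDiffAt_const contMDiffAt_id ((hZ g₀).of_le (by exact_mod_cast (le_top : (1 : ℕ∞) ≤ ⊤)))
      (WithTop.coe_le_coe.2 le_top)
  apply hsm.congr_of_eventuallyEq
  have hmem : (chartAt E g₀).source ∈ nhds g₀ :=
    (chartAt E g₀).open_source.mem_nhds (mem_chart_source E g₀)
  filter_upwards [hmem] with g hg
  erw [inTangentCoordinates_eq]
  rotate_left
  · exact mem_chart_source E _
  · simp only [id_eq, one_mul]; exact hg
  simp only [id_eq, one_mul, ContinuousLinearMap.comp_apply]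
  have hcc := (tangentBundleCore 𝓘(ℝ, E) G).coordChange_self (achart E 1) 1
    (by exact mem_chart_source E 1) (Z g)
  change _ = ((tangentBundleCore 𝓘(ℝ, E) G).coordChange (achart E g) (achart E g₀) g)
    (mfderiv 𝓘(ℝ, E) 𝓘(ℝ, E) (fun x => x * g) (1 : G)
      ((tangentBundleCore 𝓘(ℝ, E) G).coordChange (achart E 1) (achart E 1) 1 (Z g)))
  rw [hcc]
  rfl

end AuxLemmas

/-- let `Z : G → 𝔤` be a smooth 1-cocycle for the adjoint
representation (`Z(g₁g₂) = Ad_{g₁}Z(g₂) + Z(g₁)`) and let `F_ε` be the flow of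
the right-translated vector field `→Z(g) = dR_g(Z(g))` (so `F₀ = id` and
`ε ↦ F_ε(g)` is an integral curve of `→Z` for every `g`). Then each `F_ε` is a
group homomorphism: `F_ε(g₁g₂) = F_ε(g₁)F_ε(g₂)`. -/
theorem flow_of_cocycle_is_homomorphism (Z : G → E)
    (hZsmooth : ContMDiff 𝓘(ℝ, E) 𝓘(ℝ, E) (⊤ : ℕ∞) Z)
    (hZcoc : ∀ g₁ g₂ : G, Z (g₁ * g₂) = Ad g₁ (Z g₂) + Z g₁)
    (Flow : ℝ → G → G) (hF0 : ∀ g : G, Flow 0 g = g)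
    (hflow : ∀ (g : G) (ε : ℝ),
      HasMFDerivAt 𝓘(ℝ, ℝ) 𝓘(ℝ, E) (fun t => Flow t g) ε
        ((1 : ℝ →L[ℝ] ℝ).smulRight
          (mfderiv 𝓘(ℝ, E) 𝓘(ℝ, E) (fun x => x * Flow ε g) (1 : G)
            (Z (Flow ε g))))) :
    ∀ (ε : ℝ) (g₁ g₂ : G), Flow ε (g₁ * g₂) = Flow ε g₁ * Flow ε g₂ := by
  intro ε g₁ g₂
  haveI : T1Space G := ChartedSpace.t1Space (H := E) (M := G)
  haveI : IsTopologicalGroup G := topologicalGroup_of_lieGroup (I := 𝓘(ℝ, E)) (n := ((⊤ : ℕ∞) : WithTop ℕ∞))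
  haveI : T2Space G := IsTopologicalGroup.t2Space_iff_one_closed.mpr isClosed_singleton
  set V : (g : G) → TangentSpace 𝓘(ℝ, E) g :=
    fun g => mfderiv 𝓘(ℝ, E) 𝓘(ℝ, E) (fun x => x * g) (1 : G) (Z g) with hV
  have hVsec : ContMDiff 𝓘(ℝ, E) 𝓘(ℝ, E).tangent 1
      (fun g => (⟨g, V g⟩ : TangentBundle 𝓘(ℝ, E) G)) :=
    section_smooth Z hZsmooth
  have hγ : IsMIntegralCurve (fun t => Flow t (g₁ * g₂)) V := fun t => hflow _ t
  have hγ' : IsMIntegralCurve (fun t => Flow t g₁ * Flow t g₂) V := by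
    intro t
    have ha := hflow g₁ t
    have hb := hflow g₂ t
    have hpair : HasMFDerivAt 𝓘(ℝ, ℝ) (𝓘(ℝ, E).prod 𝓘(ℝ, E))
        (fun s => (Flow s g₁, Flow s g₂)) t
        (((1 : ℝ →L[ℝ] ℝ).smulRight (V (Flow t g₁))).prod
          ((1 : ℝ →L[ℝ] ℝ).smulRight (V (Flow t g₂)))) := by
      have h1 := (ha.mdifferentiableAt.prodMk hb.mdifferentiableAt).hasMFDerivAt
      rwa [ha.mdifferentiableAt.mfderiv_prod hb.mdifferentiableAt,
        ha.mfderiv, hb.mfderiv] at h1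
    have hc := ((mdiff_mul (Flow t g₁, Flow t g₂)).hasMFDerivAt).comp t hpair
    have hD : (mfderiv (𝓘(ℝ, E).prod 𝓘(ℝ, E)) 𝓘(ℝ, E) (fun p : G × G => p.1 * p.2)
          (Flow t g₁, Flow t g₂)).comp
        ((((1 : ℝ →L[ℝ] ℝ).smulRight (V (Flow t g₁))).prod
          ((1 : ℝ →L[ℝ] ℝ).smulRight (V (Flow t g₂))))) =
        (1 : ℝ →L[ℝ] ℝ).smulRight (V (Flow t g₁ * Flow t g₂)) := by
      apply ContinuousLinearMap.ext_ring
      have e1 : (((1 : ℝ →L[ℝ] ℝ).smulRight (V (Flow t g₁))).prod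
          ((1 : ℝ →L[ℝ] ℝ).smulRight (V (Flow t g₂)))) (1 : ℝ) =
          (V (Flow t g₁), V (Flow t g₂)) := by
        simp
      have e2 : ((1 : ℝ →L[ℝ] ℝ).smulRight (V (Flow t g₁ * Flow t g₂))) (1 : ℝ) =
          V (Flow t g₁ * Flow t g₂) := by simp
      erw [ContinuousLinearMap.comp_apply]
      show mfderiv (𝓘(ℝ, E).prod 𝓘(ℝ, E)) 𝓘(ℝ, E) (fun p : G × G => p.1 * p.2)
          (Flow t g₁, Flow t g₂) ((1 : ℝ) • V (Flow t g₁), (1 : ℝ) • V (Flow t g₂)) =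
        (1 : ℝ) • V (Flow t g₁ * Flow t g₂)
      rw [one_smul, one_smul, one_smul]
      simp only [hV]
      exact key_vec Z hZcoc (Flow t g₁) (Flow t g₂)
    erw [hD] at hc
    exact hc
  have key : (fun t => Flow t (g₁ * g₂)) = fun t => Flow t g₁ * Flow t g₂ := by
    apply isMIntegralCurve_eq_of_contMDiff (t₀ := 0)
      (fun t => BoundarylessManifold.isInteriorPoint) hVsec hγ hγ'
    simp [hF0]
  exact congrFun key ε
end

section
/- Let (H_ε, ι_ε) be a smooth deformation of an embedded Lie subgroup ι: H ↪ G. For each λ, the map \bar{X}_λ(h) = dR_{ι_λ(h)⁻¹}(d/dε|_{ε=λ} ι_ε(h)) mod 𝔥_λ is a 1-cocycle in C¹_{ι_λ}(H_λ, 𝔤/𝔥_λ): \bar{X}_λ(m_λ(h₁,h₂)) = \overline{Ad}_{ι_λ(h₁)} \bar{X}_λ(h₂) + \bar{X}_λ(h₁), where 𝔥_λ = dι_λ(Lie(H_λ)) and \overline{Ad} is the induced action on 𝔤/𝔥_λ. -/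
open Manifold

variable {E F : Type*} [NormedAddCommGroup E] [NormedSpace ℝ E]
  [NormedAddCommGroup F] [NormedSpace ℝ F]
  {G : Type*} [TopologicalSpace G] [ChartedSpace E G] [Group G] [LieGroup 𝓘(ℝ, E) (⊤ : ℕ∞) G]
  {H : Type*} [TopologicalSpace H] [ChartedSpace F H]
  [IsManifold 𝓘(ℝ, F) (⊤ : ℕ∞) H]

/-- Auxiliary chain rule with the base point of the outer derivative rewritten. -/
theorem mfderiv_comp_point {𝕜 : Type*} [NontriviallyNormedField 𝕜]
    {E₁ : Type*} [NormedAddCommGroup E₁] [NormedSpace 𝕜 E₁]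
    {H₁ : Type*} [TopologicalSpace H₁] {I₁ : ModelWithCorners 𝕜 E₁ H₁}
    {M₁ : Type*} [TopologicalSpace M₁] [ChartedSpace H₁ M₁]
    {E₂ : Type*} [NormedAddCommGroup E₂] [NormedSpace 𝕜 E₂]
    {H₂ : Type*} [TopologicalSpace H₂] {I₂ : ModelWithCorners 𝕜 E₂ H₂}
    {M₂ : Type*} [TopologicalSpace M₂] [ChartedSpace H₂ M₂]
    {E₃ : Type*} [NormedAddCommGroup E₃] [NormedSpace 𝕜 E₃]
    {H₃ : Type*} [TopologicalSpace H₃] {I₃ : ModelWithCorners 𝕜 E₃ H₃}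
    {M₃ : Type*} [TopologicalSpace M₃] [ChartedSpace H₃ M₃]
    {f : M₁ → M₂} {g : M₂ → M₃} {x : M₁} {y : M₂}
    (hg : MDifferentiableAt I₂ I₃ g y) (hf : MDifferentiableAt I₁ I₂ f x) (hy : f x = y) :
    mfderiv I₁ I₃ (g ∘ f) x = (mfderiv I₂ I₃ g y).comp (mfderiv I₁ I₂ f x) := by
  subst hy
  exact mfderiv_comp x hg hf

/-- let `(H_ε, ι_ε)` be a smooth deformation of an embedded Lie
subgroup of `G`: a smooth family of Lie group structures `(m_ε, inv_ε, e)` on the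
manifold `H` together with a smooth family of embeddings of Lie groups
`ι_ε : H_ε → G`.  Then for each `λ`, the map
`X̄_λ(h) = dR_{ι_λ(h)⁻¹}(d/dε|_{ε=λ} ι_ε(h)) mod 𝔥_λ` is a 1-cocycle in
`C¹_{ι_λ}(H_λ, 𝔤/𝔥_λ)`, i.e.
`X_λ(m_λ(h₁,h₂)) - Ad_{ι_λ(h₁)}X_λ(h₂) - X_λ(h₁) ∈ 𝔥_λ`, where
`𝔥_λ = dι_λ(T_e H)` is the image of the Lie algebra of `H_λ`. -/
theorem subgroup_deformation_cocycle
    (m : ℝ → H → H → H) (inv : ℝ → H → H) (e : H)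
    (hmsmooth : ContMDiff (𝓘(ℝ, ℝ).prod ((𝓘(ℝ, F)).prod 𝓘(ℝ, F))) 𝓘(ℝ, F) (⊤ : ℕ∞)
      fun p : ℝ × (H × H) => m p.1 p.2.1 p.2.2)
    (hinvsmooth : ContMDiff (𝓘(ℝ, ℝ).prod 𝓘(ℝ, F)) 𝓘(ℝ, F) (⊤ : ℕ∞)
      fun p : ℝ × H => inv p.1 p.2)
    (hassoc : ∀ (ε : ℝ) (a b c : H), m ε (m ε a b) c = m ε a (m ε b c))
    (hone : ∀ (ε : ℝ) (a : H), m ε e a = a ∧ m ε a e = a)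
    (hinv : ∀ (ε : ℝ) (a : H), m ε (inv ε a) a = e)
    (ι : ℝ → H → G)
    (hιsmooth : ContMDiff (𝓘(ℝ, ℝ).prod 𝓘(ℝ, F)) 𝓘(ℝ, E) (⊤ : ℕ∞)
      fun p : ℝ × H => ι p.1 p.2)
    (hιhom : ∀ (ε : ℝ) (h₁ h₂ : H), ι ε (m ε h₁ h₂) = ι ε h₁ * ι ε h₂)
    (hιemb : ∀ ε : ℝ, Topology.IsEmbedding (ι ε))
    (lam : ℝ) (𝔥 : Submodule ℝ E)
    (h𝔥 : ∀ v : E, v ∈ 𝔥 ↔ ∃ w : F, mfderiv 𝓘(ℝ, F) 𝓘(ℝ, E) (ι lam) e w = v)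
    (X : H → E)
    (hX : ∀ h : H, X h =
      mfderiv 𝓘(ℝ, E) 𝓘(ℝ, E) (fun x => x * (ι lam h)⁻¹) (ι lam h)
        (mfderiv 𝓘(ℝ, ℝ) 𝓘(ℝ, E) (fun ε => ι ε h) lam (1 : ℝ))) :
    ∀ h₁ h₂ : H, X (m lam h₁ h₂) - Ad (ι lam h₁) (X h₂) - X h₁ ∈ 𝔥 := by
  intro h₁ h₂
  -- algebraic preliminaries
  have hιe : ι lam e = 1 := by
    have h := hιhom lam e e
    rw [(hone lam e).1] at h
    exact left_eq_mul.mp h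
  have hιinv : ∀ a, ι lam (inv lam a) = (ι lam a)⁻¹ := by
    intro a
    have h := hιhom lam (inv lam a) a
    rw [hinv lam a, hιe] at h
    exact eq_inv_of_mul_eq_one_left h.symm
  have hrinv : ∀ a, m lam a (inv lam a) = e := by
    intro a
    apply (hιemb lam).injective
    rw [hιhom lam a (inv lam a), hιinv a, mul_inv_cancel, hιe]
  -- notation
  set h₃ := m lam h₁ h₂ with hh₃
  set g₁ := ι lam h₁ with hg₁
  set g₂ := ι lam h₂ with hg₂
  set g₃ := ι lam h₃ with hg₃def
  have hg₃ : g₃ = g₁ * g₂ := hιhom lam h₁ h₂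
  set D : H → E := fun h => mfderiv 𝓘(ℝ, ℝ) 𝓘(ℝ, E) (fun ε => ι ε h) lam (1 : ℝ) with hDdef
  set w : F := mfderiv 𝓘(ℝ, ℝ) 𝓘(ℝ, F) (fun ε => m ε h₁ h₂) lam (1 : ℝ) with hwdef
  set dι : E := mfderiv 𝓘(ℝ, F) 𝓘(ℝ, E) (ι lam) h₃ w with hdι
  set A1 : E := mfderiv 𝓘(ℝ, E) 𝓘(ℝ, E) (fun x => x * g₂) g₁ (D h₁) with hA1
  set A2 : E := mfderiv 𝓘(ℝ, E) 𝓘(ℝ, E) (fun x => g₁ * x) g₂ (D h₂) with hA2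
  -- differentiability facts
  have hΦd : MDifferentiable (𝓘(ℝ, ℝ).prod 𝓘(ℝ, F)) 𝓘(ℝ, E) (fun p : ℝ × H => ι p.1 p.2) :=
    hιsmooth.mdifferentiable (by simp : ((⊤ : ℕ∞) : WithTop ℕ∞) ≠ 0)
  have hι1d : MDifferentiable 𝓘(ℝ, F) 𝓘(ℝ, E) (ι lam) :=
    (hιsmooth.comp ((contMDiff_const (c := lam)).prodMk contMDiff_id)).mdifferentiable (by simp : ((⊤ : ℕ∞) : WithTop ℕ∞) ≠ 0)
  have hcurve : ∀ h : H, MDifferentiableAt 𝓘(ℝ, ℝ) 𝓘(ℝ, E) (fun ε => ι ε h) lam := fun h =>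
    ((hιsmooth.comp (contMDiff_id.prodMk (contMDiff_const (c := h)))).mdifferentiable (by simp : ((⊤ : ℕ∞) : WithTop ℕ∞) ≠ 0)) lam
  have hmc : MDifferentiableAt 𝓘(ℝ, ℝ) 𝓘(ℝ, F) (fun ε => m ε h₁ h₂) lam :=
    ((hmsmooth.comp (contMDiff_id.prodMk
      (contMDiff_const (c := ((h₁, h₂) : H × H))))).mdifferentiable (by simp : ((⊤ : ℕ∞) : WithTop ℕ∞) ≠ 0)) lam
  have hR : ∀ a : G, MDifferentiable 𝓘(ℝ, E) 𝓘(ℝ, E) (fun x : G => x * a) := fun a =>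
    contMDiff_mul_right.mdifferentiable (by simp : ((⊤ : ℕ∞) : WithTop ℕ∞) ≠ 0)
  have hL : MDifferentiable 𝓘(ℝ, E) 𝓘(ℝ, E) (fun x : G => g₁ * x) :=
    contMDiff_mul_left.mdifferentiable (by simp : ((⊤ : ℕ∞) : WithTop ℕ∞) ≠ 0)
  have hconj : MDifferentiable 𝓘(ℝ, E) 𝓘(ℝ, E) (fun x : G => g₁ * x * g₁⁻¹) :=
    ((contMDiff_mul_right (a := g₁⁻¹)).comp (contMDiff_mul_left (a := g₁))).mdifferentiable (by simp : ((⊤ : ℕ∞) : WithTop ℕ∞) ≠ 0)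
  -- Step A : differentiate ι ε (m ε h₁ h₂) = ι ε h₁ * ι ε h₂ at ε = lam
  have stepA : D h₃ + dι = A1 + A2 := by
    have hγ : MDifferentiableAt 𝓘(ℝ, ℝ) (𝓘(ℝ, ℝ).prod 𝓘(ℝ, F))
        (fun ε => (ε, m ε h₁ h₂)) lam := mdifferentiableAt_id.prodMk hmc
    have e1 : mfderiv 𝓘(ℝ, ℝ) 𝓘(ℝ, E) (fun ε => ι ε (m ε h₁ h₂)) lam
        = (mfderiv (𝓘(ℝ, ℝ).prod 𝓘(ℝ, F)) 𝓘(ℝ, E)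
            (fun p : ℝ × H => ι p.1 p.2) (lam, h₃)).comp
          (mfderiv 𝓘(ℝ, ℝ) (𝓘(ℝ, ℝ).prod 𝓘(ℝ, F)) (fun ε => (ε, m ε h₁ h₂)) lam) :=
      mfderiv_comp lam (hΦd (lam, h₃)) hγ
    have e2a : mfderiv 𝓘(ℝ, ℝ) (𝓘(ℝ, ℝ).prod 𝓘(ℝ, F)) (fun ε => (ε, m ε h₁ h₂)) lam
        = (mfderiv 𝓘(ℝ, ℝ) 𝓘(ℝ, ℝ) (id : ℝ → ℝ) lam).prod
          (mfderiv 𝓘(ℝ, ℝ) 𝓘(ℝ, F) (fun ε => m ε h₁ h₂) lam) :=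
      mdifferentiableAt_id.mfderiv_prod hmc
    have e2 : mfderiv 𝓘(ℝ, ℝ) (𝓘(ℝ, ℝ).prod 𝓘(ℝ, F)) (fun ε => (ε, m ε h₁ h₂)) lam (1 : ℝ)
        = (((1 : ℝ), w) : ℝ × F) := by
      rw [e2a, mfderiv_id]
      rfl
    have e3 : mfderiv (𝓘(ℝ, ℝ).prod 𝓘(ℝ, F)) 𝓘(ℝ, E)
          (fun p : ℝ × H => ι p.1 p.2) (lam, h₃) (((1 : ℝ), w) : ℝ × F)
        = D h₃ + dι :=
      mfderiv_prod_eq_add_apply (hΦd (lam, h₃))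
    have hmul : MDifferentiableAt (𝓘(ℝ, E).prod 𝓘(ℝ, E)) 𝓘(ℝ, E)
        (fun p : G × G => p.1 * p.2) (g₁, g₂) :=
      ((contMDiff_mul 𝓘(ℝ, E) ((⊤ : ℕ∞) : WithTop ℕ∞)).mdifferentiable (by simp : ((⊤ : ℕ∞) : WithTop ℕ∞) ≠ 0)) (g₁, g₂)
    have hc : MDifferentiableAt 𝓘(ℝ, ℝ) (𝓘(ℝ, E).prod 𝓘(ℝ, E))
        (fun ε => (ι ε h₁, ι ε h₂)) lam := (hcurve h₁).prodMk (hcurve h₂)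
    have e4 : mfderiv 𝓘(ℝ, ℝ) 𝓘(ℝ, E) (fun ε => ι ε h₁ * ι ε h₂) lam
        = (mfderiv (𝓘(ℝ, E).prod 𝓘(ℝ, E)) 𝓘(ℝ, E)
            (fun p : G × G => p.1 * p.2) (g₁, g₂)).comp
          (mfderiv 𝓘(ℝ, ℝ) (𝓘(ℝ, E).prod 𝓘(ℝ, E)) (fun ε => (ι ε h₁, ι ε h₂)) lam) :=
      mfderiv_comp lam hmul hc
    have e5a : mfderiv 𝓘(ℝ, ℝ) (𝓘(ℝ, E).prod 𝓘(ℝ, E)) (fun ε => (ι ε h₁, ι ε h₂)) lam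
        = (mfderiv 𝓘(ℝ, ℝ) 𝓘(ℝ, E) (fun ε => ι ε h₁) lam).prod
          (mfderiv 𝓘(ℝ, ℝ) 𝓘(ℝ, E) (fun ε => ι ε h₂) lam) :=
      (hcurve h₁).mfderiv_prod (hcurve h₂)
    have e5 : mfderiv 𝓘(ℝ, ℝ) (𝓘(ℝ, E).prod 𝓘(ℝ, E)) (fun ε => (ι ε h₁, ι ε h₂)) lam (1 : ℝ)
        = ((D h₁, D h₂) : E × E) := by
      rw [e5a]; rfl
    have e6 : mfderiv (𝓘(ℝ, E).prod 𝓘(ℝ, E)) 𝓘(ℝ, E)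
          (fun p : G × G => p.1 * p.2) (g₁, g₂) ((D h₁, D h₂) : E × E)
        = A1 + A2 :=
      mfderiv_prod_eq_add_apply hmul
    have efun : (fun ε => ι ε (m ε h₁ h₂)) = fun ε => ι ε h₁ * ι ε h₂ :=
      funext fun ε => hιhom ε h₁ h₂
    calc D h₃ + dι
        = @id E (mfderiv (𝓘(ℝ, ℝ).prod 𝓘(ℝ, F)) 𝓘(ℝ, E)
            (fun p : ℝ × H => ι p.1 p.2) (lam, h₃) (((1 : ℝ), w) : ℝ × F)) := e3.symm
      _ = @id E (mfderiv 𝓘(ℝ, ℝ) 𝓘(ℝ, E) (fun ε => ι ε (m ε h₁ h₂)) lam (1 : ℝ)) := by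
            rw [e1]
            dsimp only [id]
            exact congrArg _ e2.symm
      _ = @id E (mfderiv 𝓘(ℝ, ℝ) 𝓘(ℝ, E) (fun ε => ι ε h₁ * ι ε h₂) lam (1 : ℝ)) :=
            congrArg (fun f => (mfderiv 𝓘(ℝ, ℝ) 𝓘(ℝ, E) f lam (1 : ℝ) : E)) efun
      _ = @id E (mfderiv (𝓘(ℝ, E).prod 𝓘(ℝ, E)) 𝓘(ℝ, E)
            (fun p : G × G => p.1 * p.2) (g₁, g₂) ((D h₁, D h₂) : E × E)) := by
            rw [e4]
            dsimp only [id]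
            exact congrArg _ e5
      _ = _ := e6
  -- Step B : the two main terms
  have t1 : (mfderiv 𝓘(ℝ, E) 𝓘(ℝ, E) (fun x => x * g₃⁻¹) g₃ A1 : E) = X h₁ := by
    have hc : mfderiv 𝓘(ℝ, E) 𝓘(ℝ, E) ((fun x : G => x * g₃⁻¹) ∘ fun x : G => x * g₂) g₁
        = (mfderiv 𝓘(ℝ, E) 𝓘(ℝ, E) (fun x => x * g₃⁻¹) g₃).comp
          (mfderiv 𝓘(ℝ, E) 𝓘(ℝ, E) (fun x => x * g₂) g₁) :=
      mfderiv_comp_point (hR g₃⁻¹ g₃) (hR g₂ g₁) hg₃.symm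
    have hfun : ((fun x : G => x * g₃⁻¹) ∘ fun x : G => x * g₂) = fun x : G => x * g₁⁻¹ := by
      funext x
      simp only [Function.comp_apply]
      rw [hg₃]
      group
    have q := DFunLike.congr_fun hc (D h₁)
    rw [hfun] at q
    rw [hX h₁]
    exact q.symm
  have t2 : (mfderiv 𝓘(ℝ, E) 𝓘(ℝ, E) (fun x => x * g₃⁻¹) g₃ A2 : E) = Ad g₁ (X h₂) := by
    have c1 : mfderiv 𝓘(ℝ, E) 𝓘(ℝ, E) ((fun x : G => x * g₃⁻¹) ∘ fun x : G => g₁ * x) g₂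
        = (mfderiv 𝓘(ℝ, E) 𝓘(ℝ, E) (fun x => x * g₃⁻¹) g₃).comp
          (mfderiv 𝓘(ℝ, E) 𝓘(ℝ, E) (fun x => g₁ * x) g₂) :=
      mfderiv_comp_point (hR g₃⁻¹ g₃) (hL g₂) hg₃.symm
    have c2 : mfderiv 𝓘(ℝ, E) 𝓘(ℝ, E) ((fun x : G => g₁ * x * g₁⁻¹) ∘ fun x : G => x * g₂⁻¹) g₂
        = (mfderiv 𝓘(ℝ, E) 𝓘(ℝ, E) (fun x => g₁ * x * g₁⁻¹) 1).comp
          (mfderiv 𝓘(ℝ, E) 𝓘(ℝ, E) (fun x => x * g₂⁻¹) g₂) :=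
      mfderiv_comp_point (hconj 1) (hR g₂⁻¹ g₂) (mul_inv_cancel g₂)
    have hfun : ((fun x : G => x * g₃⁻¹) ∘ fun x : G => g₁ * x)
        = ((fun x : G => g₁ * x * g₁⁻¹) ∘ fun x : G => x * g₂⁻¹) := by
      funext x
      simp only [Function.comp_apply]
      rw [hg₃]
      group
    have q1 := DFunLike.congr_fun c1 (D h₂)
    rw [hfun] at q1
    have q2 := DFunLike.congr_fun c2 (D h₂)
    have hAd : Ad g₁ (X h₂) = mfderiv 𝓘(ℝ, E) 𝓘(ℝ, E) (fun x => g₁ * x * g₁⁻¹) 1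
        (mfderiv 𝓘(ℝ, E) 𝓘(ℝ, E) (fun x => x * g₂⁻¹) g₂ (D h₂)) := by
      rw [hX h₂]
      rfl
    rw [hAd]
    exact (q1.symm.trans q2 : _)
  -- Step C : the correction term lies in 𝔥
  have t3 : (mfderiv 𝓘(ℝ, E) 𝓘(ℝ, E) (fun x => x * g₃⁻¹) g₃ dι : E) ∈ 𝔥 := by
    have c1 : mfderiv 𝓘(ℝ, F) 𝓘(ℝ, E) ((fun x : G => x * g₃⁻¹) ∘ ι lam) h₃
        = (mfderiv 𝓘(ℝ, E) 𝓘(ℝ, E) (fun x => x * g₃⁻¹) g₃).comp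
          (mfderiv 𝓘(ℝ, F) 𝓘(ℝ, E) (ι lam) h₃) :=
      mfderiv_comp_point (hR g₃⁻¹ g₃) (hι1d h₃) hg₃def.symm
    have hrd : MDifferentiableAt 𝓘(ℝ, F) 𝓘(ℝ, F) (fun h => m lam h (inv lam h₃)) h₃ :=
      ((hmsmooth.comp ((contMDiff_const (c := lam)).prodMk
        (contMDiff_id.prodMk (contMDiff_const (c := inv lam h₃))))).mdifferentiable (by simp : ((⊤ : ℕ∞) : WithTop ℕ∞) ≠ 0)) h₃
    have c2 : mfderiv 𝓘(ℝ, F) 𝓘(ℝ, E) (ι lam ∘ fun h => m lam h (inv lam h₃)) h₃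
        = (mfderiv 𝓘(ℝ, F) 𝓘(ℝ, E) (ι lam) e).comp
          (mfderiv 𝓘(ℝ, F) 𝓘(ℝ, F) (fun h => m lam h (inv lam h₃)) h₃) :=
      mfderiv_comp_point (hι1d e) hrd (hrinv h₃)
    have hfun : ((fun x : G => x * g₃⁻¹) ∘ ι lam)
        = (ι lam ∘ fun h => m lam h (inv lam h₃)) := by
      funext h
      simp only [Function.comp_apply]
      rw [hιhom lam h (inv lam h₃), hιinv h₃, hg₃def]
    have q1 := DFunLike.congr_fun c1 w
    rw [hfun] at q1
    have q2 := DFunLike.congr_fun c2 w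
    have key : (mfderiv 𝓘(ℝ, E) 𝓘(ℝ, E) (fun x => x * g₃⁻¹) g₃ dι : E)
        = mfderiv 𝓘(ℝ, F) 𝓘(ℝ, E) (ι lam) e
          (mfderiv 𝓘(ℝ, F) 𝓘(ℝ, F) (fun h => m lam h (inv lam h₃)) h₃ w) :=
      (q1.symm.trans q2 : _)
    rw [key]
    exact (h𝔥 _).mpr ⟨_, rfl⟩
  -- assemble
  have hXh₃ : X h₃ = (mfderiv 𝓘(ℝ, E) 𝓘(ℝ, E) (fun x => x * g₃⁻¹) g₃ (D h₃) : E) := hX h₃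
  have k1 : (mfderiv 𝓘(ℝ, E) 𝓘(ℝ, E) (fun x => x * g₃⁻¹) g₃ (D h₃) : E)
      + (mfderiv 𝓘(ℝ, E) 𝓘(ℝ, E) (fun x => x * g₃⁻¹) g₃ dι : E)
      = (mfderiv 𝓘(ℝ, E) 𝓘(ℝ, E) (fun x => x * g₃⁻¹) g₃ A1 : E)
        + (mfderiv 𝓘(ℝ, E) 𝓘(ℝ, E) (fun x => x * g₃⁻¹) g₃ A2 : E) :=
    calc (mfderiv 𝓘(ℝ, E) 𝓘(ℝ, E) (fun x => x * g₃⁻¹) g₃ (D h₃) : E)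
        + (mfderiv 𝓘(ℝ, E) 𝓘(ℝ, E) (fun x => x * g₃⁻¹) g₃ dι : E)
        = mfderiv 𝓘(ℝ, E) 𝓘(ℝ, E) (fun x => x * g₃⁻¹) g₃ (D h₃ + dι) :=
          ((mfderiv 𝓘(ℝ, E) 𝓘(ℝ, E) (fun x => x * g₃⁻¹) g₃).map_add _ _).symm
      _ = mfderiv 𝓘(ℝ, E) 𝓘(ℝ, E) (fun x => x * g₃⁻¹) g₃ (A1 + A2) := congrArg _ stepA
      _ = _ := (mfderiv 𝓘(ℝ, E) 𝓘(ℝ, E) (fun x => x * g₃⁻¹) g₃).map_add _ _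
  set u : E := mfderiv 𝓘(ℝ, E) 𝓘(ℝ, E) (fun x => x * g₃⁻¹) g₃ (D h₃) with hu
  set v : E := mfderiv 𝓘(ℝ, E) 𝓘(ℝ, E) (fun x => x * g₃⁻¹) g₃ dι with hv
  set a : E := mfderiv 𝓘(ℝ, E) 𝓘(ℝ, E) (fun x => x * g₃⁻¹) g₃ A1 with ha'
  set b : E := mfderiv 𝓘(ℝ, E) 𝓘(ℝ, E) (fun x => x * g₃⁻¹) g₃ A2 with hb'
  rw [hXh₃, ← t1, ← t2]
  have ha : a = u + v - b := eq_sub_iff_add_eq.mpr k1.symm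
  rw [ha]
  have hfin : u - b - (u + v - b) = -v := by abel
  rw [hfin]
  exact 𝔥.neg_mem t3
end

section
/- Let ι: H ↪ G be an embedded Lie subgroup and (H_ε, ι_ε), (H'_ε, ι'_ε) two equivalent deformations, i.e. ι_ε ∘ F_ε = I_{g_ε} ∘ ι'_ε for a smooth family of isomorphisms F_ε: H'_ε → H_ε with F₀ = Id and a smooth curve g_ε in G with g₀ = 1. Then the degree-0 deformation classes agree: \bar{X}'₀ - \bar{X}₀ = \bar{δ}_ι(\bar{u}₀) in C¹_ι(H, 𝔤/𝔥), where u₀ = d/dε|_{ε=0} g_ε and \bar{δ}_ι(\bar{u})(h) = (Ad_{ι(h)}u - u) mod 𝔥. Hence [\bar{X}₀] = [\bar{X}'₀] ∈ H¹_ι(H, 𝔤/𝔥). -/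
open Manifold

variable {E F : Type*} [NormedAddCommGroup E] [NormedSpace ℝ E]
  [NormedAddCommGroup F] [NormedSpace ℝ F]
  {G : Type*} [TopologicalSpace G] [ChartedSpace E G] [Group G] [LieGroup 𝓘(ℝ, E) (⊤ : ℕ∞) G]
  {H : Type*} [TopologicalSpace H] [ChartedSpace F H]
  [IsManifold 𝓘(ℝ, F) (⊤ : ℕ∞) H]

lemma mfderiv_point_congr_s14 (f : G → G) (a b : G) (hab : a = b) (v : E) :
    mfderiv 𝓘(ℝ, E) 𝓘(ℝ, E) f a v = mfderiv 𝓘(ℝ, E) 𝓘(ℝ, E) f b v := by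
  subst hab; rfl

lemma mfderiv_point_congr' (f : H → G) (a b : H) (hab : a = b) (v : F) :
    mfderiv 𝓘(ℝ, F) 𝓘(ℝ, E) f a v = mfderiv 𝓘(ℝ, F) 𝓘(ℝ, E) f b v := by
  subst hab; rfl

lemma curve_mul_mfderiv (a b : ℝ → G) (t : ℝ)
    (ha : MDifferentiableAt 𝓘(ℝ, ℝ) 𝓘(ℝ, E) a t)
    (hb : MDifferentiableAt 𝓘(ℝ, ℝ) 𝓘(ℝ, E) b t) :
    mfderiv 𝓘(ℝ, ℝ) 𝓘(ℝ, E) (fun ε => a ε * b ε) t (1:ℝ) =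
      mfderiv 𝓘(ℝ, E) 𝓘(ℝ, E) (fun x => x * b t) (a t)
        (mfderiv 𝓘(ℝ, ℝ) 𝓘(ℝ, E) a t (1:ℝ)) +
      mfderiv 𝓘(ℝ, E) 𝓘(ℝ, E) (fun x => a t * x) (b t)
        (mfderiv 𝓘(ℝ, ℝ) 𝓘(ℝ, E) b t (1:ℝ)) := by
  have hmul : MDifferentiableAt (𝓘(ℝ, E).prod 𝓘(ℝ, E)) 𝓘(ℝ, E)
      (fun p : G × G => p.1 * p.2) (a t, b t) :=
    (contMDiff_mul 𝓘(ℝ, E) (⊤ : ℕ∞)).mdifferentiableAt (by simp)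
  have hpair : MDifferentiableAt 𝓘(ℝ, ℝ) (𝓘(ℝ, E).prod 𝓘(ℝ, E))
      (fun ε => (a ε, b ε)) t := ha.prodMk hb
  have hcomp : (fun ε => a ε * b ε)
      = (fun p : G × G => p.1 * p.2) ∘ (fun ε => (a ε, b ε)) := rfl
  rw [hcomp, mfderiv_comp t hmul hpair]
  have hp : mfderiv 𝓘(ℝ, ℝ) (𝓘(ℝ, E).prod 𝓘(ℝ, E)) (fun ε => (a ε, b ε)) t =
      (mfderiv 𝓘(ℝ, ℝ) 𝓘(ℝ, E) a t).prod (mfderiv 𝓘(ℝ, ℝ) 𝓘(ℝ, E) b t) :=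
    ha.mfderiv_prod hb
  simp only [ContinuousLinearMap.comp_apply, hp]
  exact mfderiv_prod_eq_add_apply hmul

lemma dR_dR_cancel (p : G) (u : E) :
    mfderiv 𝓘(ℝ, E) 𝓘(ℝ, E) (fun x => x * p⁻¹) p
      (mfderiv 𝓘(ℝ, E) 𝓘(ℝ, E) (fun x => x * p) 1 u) = u := by
  have h1 : MDifferentiableAt 𝓘(ℝ, E) 𝓘(ℝ, E) (fun x : G => x * p⁻¹)
      ((fun x : G => x * p) 1) :=
    (contMDiff_mul_right (n := (⊤ : ℕ∞))).mdifferentiableAt (by simp)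
  have h2 : MDifferentiableAt 𝓘(ℝ, E) 𝓘(ℝ, E) (fun x : G => x * p) (1:G) :=
    (contMDiff_mul_right (n := (⊤ : ℕ∞))).mdifferentiableAt (by simp)
  have hcomp := mfderiv_comp (I' := 𝓘(ℝ, E)) (1:G) h1 h2
  have hfun : ((fun x : G => x * p⁻¹) ∘ (fun x : G => x * p)) = id := by
    funext x; simp
  have key := DFunLike.congr_fun hcomp u
  rw [hfun, mfderiv_id] at key
  refine (mfderiv_point_congr_s14 (fun x : G => x * p⁻¹) p (1 * p) (one_mul p).symm _).trans ?_
  exact key.symm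

lemma dR_dL_Ad (p : G) (u : E) :
    mfderiv 𝓘(ℝ, E) 𝓘(ℝ, E) (fun x => x * p⁻¹) p
      (mfderiv 𝓘(ℝ, E) 𝓘(ℝ, E) (fun x => p * x) 1 u) = Ad p u := by
  have h1 : MDifferentiableAt 𝓘(ℝ, E) 𝓘(ℝ, E) (fun x : G => x * p⁻¹)
      ((fun x : G => p * x) 1) :=
    (contMDiff_mul_right (n := (⊤ : ℕ∞))).mdifferentiableAt (by simp)
  have h2 : MDifferentiableAt 𝓘(ℝ, E) 𝓘(ℝ, E) (fun x : G => p * x) (1:G) :=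
    (contMDiff_mul_left (n := (⊤ : ℕ∞))).mdifferentiableAt (by simp)
  have hcomp := mfderiv_comp (I' := 𝓘(ℝ, E)) (1:G) h1 h2
  have hfun : ((fun x : G => x * p⁻¹) ∘ (fun x : G => p * x))
      = fun x : G => p * x * p⁻¹ := rfl
  have key := DFunLike.congr_fun hcomp u
  rw [hfun] at key
  simp only [ContinuousLinearMap.comp_apply] at key
  refine (mfderiv_point_congr_s14 (fun x : G => x * p⁻¹) p (p * 1) (mul_one p).symm _).trans ?_
  exact key.symm

lemma inv_curve_mfderiv (g : ℝ → G)
    (hg : MDifferentiableAt 𝓘(ℝ, ℝ) 𝓘(ℝ, E) g 0) (hg0 : g 0 = 1) :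
    mfderiv 𝓘(ℝ, ℝ) 𝓘(ℝ, E) (fun ε => (g ε)⁻¹) 0 (1:ℝ) =
      - mfderiv 𝓘(ℝ, ℝ) 𝓘(ℝ, E) g 0 (1:ℝ) := by
  have hginv : MDifferentiableAt 𝓘(ℝ, ℝ) 𝓘(ℝ, E) (fun ε => (g ε)⁻¹) 0 := by
    have h0 : MDifferentiableAt 𝓘(ℝ, E) 𝓘(ℝ, E) (fun x : G => x⁻¹) (g 0) :=
      (contMDiff_inv 𝓘(ℝ, E) (⊤ : ℕ∞)).mdifferentiableAt (by simp)
    exact h0.comp 0 hg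
  have key := curve_mul_mfderiv g (fun ε => (g ε)⁻¹) 0 hg hginv
  have hconst : (fun ε => g ε * (g ε)⁻¹) = fun _ : ℝ => (1:G) := by
    funext ε; simp
  have e1 : ((fun ε => (g ε)⁻¹) 0) = (1:G) := by show (g 0)⁻¹ = 1; rw [hg0, inv_one]
  rw [hconst, hg0, inv_one] at key
  have hid1 : (fun x : G => x * 1) = id := funext fun x => mul_one x
  have hid2 : (fun x : G => (1:G) * x) = id := funext fun x => one_mul x
  rw [hid1, hid2, mfderiv_id, mfderiv_const] at key
  have key2 : (HAdd.hAdd (α := E) (β := E) (γ := E)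
      (mfderiv 𝓘(ℝ, ℝ) 𝓘(ℝ, E) g 0 (1:ℝ))
      (mfderiv 𝓘(ℝ, ℝ) 𝓘(ℝ, E) (fun ε => (g ε)⁻¹) 0 (1:ℝ))) = (0:E) := key.symm
  exact eq_neg_of_add_eq_zero_right key2

lemma curve_param_mfderiv (f : ℝ → H → G)
    (hf : ContMDiff (𝓘(ℝ, ℝ).prod 𝓘(ℝ, F)) 𝓘(ℝ, E) (⊤ : ℕ∞) fun p : ℝ × H => f p.1 p.2)
    (y : ℝ → H) (hy : MDifferentiableAt 𝓘(ℝ, ℝ) 𝓘(ℝ, F) y 0) :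
    mfderiv 𝓘(ℝ, ℝ) 𝓘(ℝ, E) (fun ε => f ε (y ε)) 0 (1:ℝ) =
      mfderiv 𝓘(ℝ, ℝ) 𝓘(ℝ, E) (fun ε => f ε (y 0)) 0 (1:ℝ) +
      mfderiv 𝓘(ℝ, F) 𝓘(ℝ, E) (f 0) (y 0) (mfderiv 𝓘(ℝ, ℝ) 𝓘(ℝ, F) y 0 (1:ℝ)) := by
  have hΦ : MDifferentiableAt (𝓘(ℝ, ℝ).prod 𝓘(ℝ, F)) 𝓘(ℝ, E)
      (fun q : ℝ × H => f q.1 q.2) (0, y 0) := hf.mdifferentiableAt (by simp)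
  have hpair : MDifferentiableAt 𝓘(ℝ, ℝ) (𝓘(ℝ, ℝ).prod 𝓘(ℝ, F))
      (fun ε => (ε, y ε)) 0 := mdifferentiableAt_id.prodMk hy
  have hcomp : (fun ε => f ε (y ε))
      = (fun q : ℝ × H => f q.1 q.2) ∘ (fun ε => (ε, y ε)) := rfl
  rw [hcomp, mfderiv_comp 0 hΦ hpair]
  have hp : mfderiv 𝓘(ℝ, ℝ) (𝓘(ℝ, ℝ).prod 𝓘(ℝ, F)) (fun ε => (ε, y ε)) 0 =
      (mfderiv 𝓘(ℝ, ℝ) 𝓘(ℝ, ℝ) id 0).prod (mfderiv 𝓘(ℝ, ℝ) 𝓘(ℝ, F) y 0) :=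
    mdifferentiableAt_id.mfderiv_prod hy
  simp only [ContinuousLinearMap.comp_apply, hp, mfderiv_id,
    ContinuousLinearMap.prod_apply, ContinuousLinearMap.id_apply]
  exact mfderiv_prod_eq_add_apply
    (v := (((1:ℝ), (mfderiv 𝓘(ℝ, ℝ) 𝓘(ℝ, F) y 0) (1:ℝ)) :
      TangentSpace (𝓘(ℝ, ℝ).prod 𝓘(ℝ, F)) ((0:ℝ), y 0))) hΦ

/-- if `(H_ε, ι_ε)` and `(H'_ε, ι'_ε)` are equivalent smooth
deformations of an embedded Lie subgroup `ι₀ : H ↪ G`, i.e.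
`ι_ε ∘ F_ε = I_{g_ε} ∘ ι'_ε` for a smooth family of Lie group isomorphisms
`F_ε : H'_ε → H_ε` with `F₀ = Id` and a smooth curve `g_ε` with `g₀ = 1`, then
the deformation classes at time `0` agree:
`X̄'₀ - X̄₀ = δ̄_ι(ū₀)` in `C¹_ι(H, 𝔤/𝔥)`, i.e.
`X'₀(h) - X₀(h) - (Ad_{ι₀(h)}u₀ - u₀) ∈ 𝔥` where `u₀ = d/dε|₀ g_ε`.
Hence `[X̄₀] = [X̄'₀] ∈ H¹_ι(H, 𝔤/𝔥)`. -/
theorem equivalent_subgroup_deformations_cohomologous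
    (m m' : ℝ → H → H → H) (inv inv' : ℝ → H → H) (e : H)
    (hmsmooth : ContMDiff (𝓘(ℝ, ℝ).prod ((𝓘(ℝ, F)).prod 𝓘(ℝ, F))) 𝓘(ℝ, F) (⊤ : ℕ∞)
      fun p : ℝ × (H × H) => m p.1 p.2.1 p.2.2)
    (hmsmooth' : ContMDiff (𝓘(ℝ, ℝ).prod ((𝓘(ℝ, F)).prod 𝓘(ℝ, F))) 𝓘(ℝ, F) (⊤ : ℕ∞)
      fun p : ℝ × (H × H) => m' p.1 p.2.1 p.2.2)
    (hassoc : ∀ (ε : ℝ) (a b c : H), m ε (m ε a b) c = m ε a (m ε b c))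
    (hassoc' : ∀ (ε : ℝ) (a b c : H), m' ε (m' ε a b) c = m' ε a (m' ε b c))
    (hone : ∀ (ε : ℝ) (a : H), m ε e a = a ∧ m ε a e = a)
    (hone' : ∀ (ε : ℝ) (a : H), m' ε e a = a ∧ m' ε a e = a)
    (hinv : ∀ (ε : ℝ) (a : H), m ε (inv ε a) a = e)
    (hinv' : ∀ (ε : ℝ) (a : H), m' ε (inv' ε a) a = e)
    (hm0 : m 0 = m' 0)
    (ι ι' : ℝ → H → G)
    (hιsmooth : ContMDiff (𝓘(ℝ, ℝ).prod 𝓘(ℝ, F)) 𝓘(ℝ, E) (⊤ : ℕ∞)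
      fun p : ℝ × H => ι p.1 p.2)
    (hιsmooth' : ContMDiff (𝓘(ℝ, ℝ).prod 𝓘(ℝ, F)) 𝓘(ℝ, E) (⊤ : ℕ∞)
      fun p : ℝ × H => ι' p.1 p.2)
    (hιhom : ∀ (ε : ℝ) (h₁ h₂ : H), ι ε (m ε h₁ h₂) = ι ε h₁ * ι ε h₂)
    (hιhom' : ∀ (ε : ℝ) (h₁ h₂ : H), ι' ε (m' ε h₁ h₂) = ι' ε h₁ * ι' ε h₂)
    (hιemb : ∀ ε : ℝ, Topology.IsEmbedding (ι ε))
    (hιemb' : ∀ ε : ℝ, Topology.IsEmbedding (ι' ε))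
    (hι0 : ι 0 = ι' 0)
    (Fam : ℝ → H → H)
    (hFamsmooth : ContMDiff (𝓘(ℝ, ℝ).prod 𝓘(ℝ, F)) 𝓘(ℝ, F) (⊤ : ℕ∞)
      fun p : ℝ × H => Fam p.1 p.2)
    (hFamiso : ∀ ε : ℝ, Function.Bijective (Fam ε))
    (hFamhom : ∀ (ε : ℝ) (a b : H), Fam ε (m' ε a b) = m ε (Fam ε a) (Fam ε b))
    (hFam0 : ∀ h : H, Fam 0 h = h)
    (g : ℝ → G) (hg : ContMDiff 𝓘(ℝ, ℝ) 𝓘(ℝ, E) (⊤ : ℕ∞) g) (hg0 : g 0 = 1)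
    (hequiv : ∀ (ε : ℝ) (h : H), ι ε (Fam ε h) = g ε * ι' ε h * (g ε)⁻¹)
    (u₀ : E) (hu₀ : u₀ = mfderiv 𝓘(ℝ, ℝ) 𝓘(ℝ, E) g 0 (1 : ℝ))
    (𝔥 : Submodule ℝ E)
    (h𝔥 : ∀ v : E, v ∈ 𝔥 ↔ ∃ w : F, mfderiv 𝓘(ℝ, F) 𝓘(ℝ, E) (ι 0) e w = v)
    (X X' : H → E)
    (hX : ∀ h : H, X h =
      mfderiv 𝓘(ℝ, E) 𝓘(ℝ, E) (fun x => x * (ι 0 h)⁻¹) (ι 0 h)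
        (mfderiv 𝓘(ℝ, ℝ) 𝓘(ℝ, E) (fun ε => ι ε h) 0 (1 : ℝ)))
    (hX' : ∀ h : H, X' h =
      mfderiv 𝓘(ℝ, E) 𝓘(ℝ, E) (fun x => x * (ι' 0 h)⁻¹) (ι' 0 h)
        (mfderiv 𝓘(ℝ, ℝ) 𝓘(ℝ, E) (fun ε => ι' ε h) 0 (1 : ℝ))) :
    ∀ h : H, X' h - X h - (Ad (ι 0 h) u₀ - u₀) ∈ 𝔥 := by
  intro h
  have hgd : MDifferentiableAt 𝓘(ℝ, ℝ) 𝓘(ℝ, E) g 0 := hg.mdifferentiableAt (by simp)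
  have hcd : MDifferentiableAt 𝓘(ℝ, ℝ) 𝓘(ℝ, E) (fun ε => ι' ε h) 0 := by
    have : ContMDiff 𝓘(ℝ, ℝ) 𝓘(ℝ, E) (⊤ : ℕ∞) (fun ε : ℝ => ι' ε h) :=
      hιsmooth'.comp (contMDiff_id.prodMk contMDiff_const)
    exact this.mdifferentiableAt (by simp)
  have hyd : MDifferentiableAt 𝓘(ℝ, ℝ) 𝓘(ℝ, F) (fun ε => Fam ε h) 0 := by
    have : ContMDiff 𝓘(ℝ, ℝ) 𝓘(ℝ, F) (⊤ : ℕ∞) (fun ε : ℝ => Fam ε h) :=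
      hFamsmooth.comp (contMDiff_id.prodMk contMDiff_const)
    exact this.mdifferentiableAt (by simp)
  have hι0d : ∀ x : H, MDifferentiableAt 𝓘(ℝ, F) 𝓘(ℝ, E) (ι 0) x := by
    intro x
    have : ContMDiff 𝓘(ℝ, F) 𝓘(ℝ, E) (⊤ : ℕ∞) (fun z : H => ι 0 z) :=
      hιsmooth.comp (contMDiff_const.prodMk contMDiff_id)
    exact this.mdifferentiableAt (by simp)
  have hρd : MDifferentiableAt 𝓘(ℝ, F) 𝓘(ℝ, F) (fun x : H => m 0 x (inv 0 h)) h := by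
    have : ContMDiff 𝓘(ℝ, F) 𝓘(ℝ, F) (⊤ : ℕ∞) (fun x : H => m 0 x (inv 0 h)) :=
      hmsmooth.comp (contMDiff_const.prodMk (contMDiff_id.prodMk contMDiff_const))
    exact this.mdifferentiableAt (by simp)
  have hιe : ι 0 e = 1 := by
    have h1 := hιhom 0 e e
    rw [(hone 0 e).1] at h1
    exact (left_eq_mul.mp h1)
  have hrinv : m 0 h (inv 0 h) = e := by
    have k : m 0 (inv 0 (inv 0 h)) (inv 0 h) = e := hinv 0 (inv 0 h)
    calc m 0 h (inv 0 h)
        = m 0 (m 0 e h) (inv 0 h) := by rw [(hone 0 h).1]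
      _ = m 0 (m 0 (m 0 (inv 0 (inv 0 h)) (inv 0 h)) h) (inv 0 h) := by rw [k]
      _ = m 0 (m 0 (inv 0 (inv 0 h)) (m 0 (inv 0 h) h)) (inv 0 h) := by
          rw [hassoc 0 (inv 0 (inv 0 h)) (inv 0 h) h]
      _ = m 0 (m 0 (inv 0 (inv 0 h)) e) (inv 0 h) := by rw [hinv 0 h]
      _ = m 0 (inv 0 (inv 0 h)) (m 0 e (inv 0 h)) := by
          rw [hassoc 0 (inv 0 (inv 0 h)) e (inv 0 h)]
      _ = m 0 (inv 0 (inv 0 h)) (inv 0 h) := by rw [(hone 0 (inv 0 h)).1]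
      _ = e := k
  have hpinv : ι 0 (inv 0 h) = (ι 0 h)⁻¹ := by
    have h1 : ι 0 (inv 0 h) * ι 0 h = 1 := by
      rw [← hιhom 0, hinv 0 h, hιe]
    exact eq_inv_of_mul_eq_one_left h1
  have hcurves : (fun ε => ι ε (Fam ε h)) = fun ε => g ε * ι' ε h * (g ε)⁻¹ := by
    funext ε; exact hequiv ε h
  have hqd : MDifferentiableAt 𝓘(ℝ, ℝ) 𝓘(ℝ, E) (fun ε => g ε * ι' ε h) 0 := by
    have hmul : MDifferentiableAt (𝓘(ℝ, E).prod 𝓘(ℝ, E)) 𝓘(ℝ, E)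
        (fun p : G × G => p.1 * p.2) (g 0, ι' 0 h) :=
      (contMDiff_mul 𝓘(ℝ, E) (⊤ : ℕ∞)).mdifferentiableAt (by simp)
    exact hmul.comp 0 (hgd.prodMk hcd)
  have hginvd : MDifferentiableAt 𝓘(ℝ, ℝ) 𝓘(ℝ, E) (fun ε => (g ε)⁻¹) 0 := by
    have h0 : MDifferentiableAt 𝓘(ℝ, E) 𝓘(ℝ, E) (fun x : G => x⁻¹) (g 0) :=
      (contMDiff_inv 𝓘(ℝ, E) (⊤ : ℕ∞)).mdifferentiableAt (by simp)
    exact h0.comp 0 hgd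
  have hid1 : (fun x : G => x * 1) = id := funext fun x => mul_one x
  have hid2 : (fun x : G => (1:G) * x) = id := funext fun x => one_mul x
  -- LHS derivative
  have keyL := curve_param_mfderiv ι hιsmooth (fun ε => Fam ε h) hyd
  have hy0 : (fun ε => Fam ε h) 0 = h := hFam0 h
  rw [hFam0 h] at keyL
  have eqL : @id E ((mfderiv 𝓘(ℝ, ℝ) 𝓘(ℝ, E) (fun ε => ι ε (Fam ε h)) 0) (1 : ℝ)) = @id E ((mfderiv 𝓘(ℝ, ℝ) 𝓘(ℝ, E) (fun ε => ι ε h) 0) (1 : ℝ)) + @id E ((mfderiv 𝓘(ℝ, F) 𝓘(ℝ, E) (ι 0) h) ((mfderiv 𝓘(ℝ, ℝ) 𝓘(ℝ, F) (fun ε => Fam ε h) 0) (1 : ℝ))) := keyL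
  -- derivative of q
  have keyq := curve_mul_mfderiv g (fun ε => ι' ε h) 0 hgd hcd
  have ebe : (fun ε => ι' ε h) 0 = ι 0 h := by show ι' 0 h = ι 0 h; rw [hι0]
  rw [← hι0, hg0] at keyq
  have eqq : @id E ((mfderiv 𝓘(ℝ, ℝ) 𝓘(ℝ, E) (fun ε => g ε * ι' ε h) 0) (1 : ℝ)) = @id E ((mfderiv 𝓘(ℝ, E) 𝓘(ℝ, E) (fun x => x * ι 0 h) 1) ((mfderiv 𝓘(ℝ, ℝ) 𝓘(ℝ, E) g 0) (1 : ℝ))) + @id E ((mfderiv 𝓘(ℝ, E) 𝓘(ℝ, E) (fun x => (1:G) * x) (ι 0 h)) ((mfderiv 𝓘(ℝ, ℝ) 𝓘(ℝ, E) (fun ε => ι' ε h) 0) (1 : ℝ))) := keyq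
  have eqq2 : @id E ((mfderiv 𝓘(ℝ, E) 𝓘(ℝ, E) (fun x => (1:G) * x) (ι 0 h)) ((mfderiv 𝓘(ℝ, ℝ) 𝓘(ℝ, E) (fun ε => ι' ε h) 0) (1 : ℝ))) = @id E ((mfderiv 𝓘(ℝ, ℝ) 𝓘(ℝ, E) (fun ε => ι' ε h) 0) (1 : ℝ)) := by
    rw [hid2, mfderiv_id]
    rfl
  -- derivative of r
  have keyr := curve_mul_mfderiv (fun ε => g ε * ι' ε h) (fun ε => (g ε)⁻¹) 0 hqd hginvd
  have einv0 : (fun ε => (g ε)⁻¹) 0 = 1 := by show (g 0)⁻¹ = 1; rw [hg0, inv_one]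
  have eq0 : (fun ε => g ε * ι' ε h) 0 = ι 0 h := by
    show g 0 * ι' 0 h = ι 0 h; rw [hg0, one_mul, hι0]
  rw [hg0, inv_one, one_mul, ← hι0] at keyr
  have eqr : @id E ((mfderiv 𝓘(ℝ, ℝ) 𝓘(ℝ, E) (fun ε => g ε * ι' ε h * (g ε)⁻¹) 0) (1 : ℝ)) = @id E ((mfderiv 𝓘(ℝ, E) 𝓘(ℝ, E) (fun x => x * (1:G)) (ι 0 h)) ((mfderiv 𝓘(ℝ, ℝ) 𝓘(ℝ, E) (fun ε => g ε * ι' ε h) 0) (1 : ℝ))) + @id E ((mfderiv 𝓘(ℝ, E) 𝓘(ℝ, E) (fun x => ι 0 h * x) (1:G)) ((mfderiv 𝓘(ℝ, ℝ) 𝓘(ℝ, E) (fun ε => (g ε)⁻¹) 0) (1 : ℝ))) := keyr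
  have eqr2 : @id E ((mfderiv 𝓘(ℝ, E) 𝓘(ℝ, E) (fun x => x * (1:G)) (ι 0 h)) ((mfderiv 𝓘(ℝ, ℝ) 𝓘(ℝ, E) (fun ε => g ε * ι' ε h) 0) (1 : ℝ))) = @id E ((mfderiv 𝓘(ℝ, ℝ) 𝓘(ℝ, E) (fun ε => g ε * ι' ε h) 0) (1 : ℝ)) := by
    rw [hid1, mfderiv_id]
    rfl
  have eqr3 : @id E ((mfderiv 𝓘(ℝ, E) 𝓘(ℝ, E) (fun x => ι 0 h * x) (1:G)) ((mfderiv 𝓘(ℝ, ℝ) 𝓘(ℝ, E) (fun ε => (g ε)⁻¹) 0) (1 : ℝ))) = -(@id E ((mfderiv 𝓘(ℝ, E) 𝓘(ℝ, E) (fun x => ι 0 h * x) (1:G)) ((mfderiv 𝓘(ℝ, ℝ) 𝓘(ℝ, E) g 0) (1 : ℝ)))) := by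
    rw [inv_curve_mfderiv g hgd hg0]
    exact map_neg _ _
  -- master equation
  have master : @id E ((mfderiv 𝓘(ℝ, ℝ) 𝓘(ℝ, E) (fun ε => ι ε h) 0) (1 : ℝ)) + @id E ((mfderiv 𝓘(ℝ, F) 𝓘(ℝ, E) (ι 0) h) ((mfderiv 𝓘(ℝ, ℝ) 𝓘(ℝ, F) (fun ε => Fam ε h) 0) (1 : ℝ))) = @id E ((mfderiv 𝓘(ℝ, E) 𝓘(ℝ, E) (fun x => x * ι 0 h) 1) ((mfderiv 𝓘(ℝ, ℝ) 𝓘(ℝ, E) g 0) (1 : ℝ))) + @id E ((mfderiv 𝓘(ℝ, ℝ) 𝓘(ℝ, E) (fun ε => ι' ε h) 0) (1 : ℝ)) + -(@id E ((mfderiv 𝓘(ℝ, E) 𝓘(ℝ, E) (fun x => ι 0 h * x) (1:G)) ((mfderiv 𝓘(ℝ, ℝ) 𝓘(ℝ, E) g 0) (1 : ℝ)))) := by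
    calc @id E ((mfderiv 𝓘(ℝ, ℝ) 𝓘(ℝ, E) (fun ε => ι ε h) 0) (1 : ℝ)) + @id E ((mfderiv 𝓘(ℝ, F) 𝓘(ℝ, E) (ι 0) h) ((mfderiv 𝓘(ℝ, ℝ) 𝓘(ℝ, F) (fun ε => Fam ε h) 0) (1 : ℝ)))
        = @id E ((mfderiv 𝓘(ℝ, ℝ) 𝓘(ℝ, E) (fun ε => ι ε (Fam ε h)) 0) (1 : ℝ)) := eqL.symm
      _ = @id E ((mfderiv 𝓘(ℝ, ℝ) 𝓘(ℝ, E) (fun ε => g ε * ι' ε h * (g ε)⁻¹) 0) (1 : ℝ)) :=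
          congrArg (fun c : ℝ → G => @id E ((mfderiv 𝓘(ℝ, ℝ) 𝓘(ℝ, E) c 0) (1 : ℝ))) hcurves
      _ = @id E ((mfderiv 𝓘(ℝ, E) 𝓘(ℝ, E) (fun x => x * (1:G)) (ι 0 h)) ((mfderiv 𝓘(ℝ, ℝ) 𝓘(ℝ, E) (fun ε => g ε * ι' ε h) 0) (1 : ℝ))) + @id E ((mfderiv 𝓘(ℝ, E) 𝓘(ℝ, E) (fun x => ι 0 h * x) (1:G)) ((mfderiv 𝓘(ℝ, ℝ) 𝓘(ℝ, E) (fun ε => (g ε)⁻¹) 0) (1 : ℝ))) := eqr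
      _ = @id E ((mfderiv 𝓘(ℝ, ℝ) 𝓘(ℝ, E) (fun ε => g ε * ι' ε h) 0) (1 : ℝ)) + -(@id E ((mfderiv 𝓘(ℝ, E) 𝓘(ℝ, E) (fun x => ι 0 h * x) (1:G)) ((mfderiv 𝓘(ℝ, ℝ) 𝓘(ℝ, E) g 0) (1 : ℝ)))) := by rw [eqr2, eqr3]
      _ = (@id E ((mfderiv 𝓘(ℝ, E) 𝓘(ℝ, E) (fun x => x * ι 0 h) 1) ((mfderiv 𝓘(ℝ, ℝ) 𝓘(ℝ, E) g 0) (1 : ℝ))) + @id E ((mfderiv 𝓘(ℝ, E) 𝓘(ℝ, E) (fun x => (1:G) * x) (ι 0 h)) ((mfderiv 𝓘(ℝ, ℝ) 𝓘(ℝ, E) (fun ε => ι' ε h) 0) (1 : ℝ)))) + -(@id E ((mfderiv 𝓘(ℝ, E) 𝓘(ℝ, E) (fun x => ι 0 h * x) (1:G)) ((mfderiv 𝓘(ℝ, ℝ) 𝓘(ℝ, E) g 0) (1 : ℝ)))) := by rw [eqq]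
      _ = @id E ((mfderiv 𝓘(ℝ, E) 𝓘(ℝ, E) (fun x => x * ι 0 h) 1) ((mfderiv 𝓘(ℝ, ℝ) 𝓘(ℝ, E) g 0) (1 : ℝ))) + @id E ((mfderiv 𝓘(ℝ, ℝ) 𝓘(ℝ, E) (fun ε => ι' ε h) 0) (1 : ℝ)) + -(@id E ((mfderiv 𝓘(ℝ, E) 𝓘(ℝ, E) (fun x => ι 0 h * x) (1:G)) ((mfderiv 𝓘(ℝ, ℝ) 𝓘(ℝ, E) g 0) (1 : ℝ)))) := by rw [eqq2]
  -- apply the right translation dR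
  have expand : @id E ((mfderiv 𝓘(ℝ, E) 𝓘(ℝ, E) (fun x => x * (ι 0 h)⁻¹) (ι 0 h)) (@id E ((mfderiv 𝓘(ℝ, ℝ) 𝓘(ℝ, E) (fun ε => ι ε h) 0) (1 : ℝ)))) + @id E ((mfderiv 𝓘(ℝ, E) 𝓘(ℝ, E) (fun x => x * (ι 0 h)⁻¹) (ι 0 h)) (@id E ((mfderiv 𝓘(ℝ, F) 𝓘(ℝ, E) (ι 0) h) ((mfderiv 𝓘(ℝ, ℝ) 𝓘(ℝ, F) (fun ε => Fam ε h) 0) (1 : ℝ))))) = @id E ((mfderiv 𝓘(ℝ, E) 𝓘(ℝ, E) (fun x => x * (ι 0 h)⁻¹) (ι 0 h)) (@id E ((mfderiv 𝓘(ℝ, E) 𝓘(ℝ, E) (fun x => x * ι 0 h) 1) ((mfderiv 𝓘(ℝ, ℝ) 𝓘(ℝ, E) g 0) (1 : ℝ))))) + @id E ((mfderiv 𝓘(ℝ, E) 𝓘(ℝ, E) (fun x => x * (ι 0 h)⁻¹) (ι 0 h)) (@id E ((mfderiv 𝓘(ℝ, ℝ) 𝓘(ℝ, E) (fun ε => ι'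 ε h) 0) (1 : ℝ)))) + -(@id E ((mfderiv 𝓘(ℝ, E) 𝓘(ℝ, E) (fun x => x * (ι 0 h)⁻¹) (ι 0 h)) (@id E ((mfderiv 𝓘(ℝ, E) 𝓘(ℝ, E) (fun x => ι 0 h * x) (1:G)) ((mfderiv 𝓘(ℝ, ℝ) 𝓘(ℝ, E) g 0) (1 : ℝ)))))) := by
    have h1 := congrArg
      (fun z : E => (mfderiv 𝓘(ℝ, E) 𝓘(ℝ, E) (fun x => x * (ι 0 h)⁻¹) (ι 0 h)) z) master
    exact ((map_add (mfderiv 𝓘(ℝ, E) 𝓘(ℝ, E) (fun x => x * (ι 0 h)⁻¹) (ι 0 h)) _ _).symm.trans h1).trans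
      ((map_add (mfderiv 𝓘(ℝ, E) 𝓘(ℝ, E) (fun x => x * (ι 0 h)⁻¹) (ι 0 h)) _ _).trans (congrArg₂ (· + ·) (map_add (mfderiv 𝓘(ℝ, E) 𝓘(ℝ, E) (fun x => x * (ι 0 h)⁻¹) (ι 0 h)) _ _) (map_neg (mfderiv 𝓘(ℝ, E) 𝓘(ℝ, E) (fun x => x * (ι 0 h)⁻¹) (ι 0 h)) _)))
  have i1 : @id E ((mfderiv 𝓘(ℝ, E) 𝓘(ℝ, E) (fun x => x * (ι 0 h)⁻¹) (ι 0 h)) (@id E ((mfderiv 𝓘(ℝ, E) 𝓘(ℝ, E) (fun x => x * ι 0 h) 1) ((mfderiv 𝓘(ℝ, ℝ) 𝓘(ℝ, E) g 0) (1 : ℝ))))) = @id E ((mfderiv 𝓘(ℝ, ℝ) 𝓘(ℝ, E) g 0) (1 : ℝ)) := dR_dR_cancel (ι 0 h) _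
  have i2 : @id E ((mfderiv 𝓘(ℝ, E) 𝓘(ℝ, E) (fun x => x * (ι 0 h)⁻¹) (ι 0 h)) (@id E ((mfderiv 𝓘(ℝ, E) 𝓘(ℝ, E) (fun x => ι 0 h * x) (1:G)) ((mfderiv 𝓘(ℝ, ℝ) 𝓘(ℝ, E) g 0) (1 : ℝ))))) = Ad (ι 0 h) (@id E ((mfderiv 𝓘(ℝ, ℝ) 𝓘(ℝ, E) g 0) (1 : ℝ))) := dR_dL_Ad (ι 0 h) _
  -- the witness computation
  have hcompfun : ((ι 0) ∘ (fun x : H => m 0 x (inv 0 h)))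
      = fun x : H => ι 0 x * (ι 0 h)⁻¹ := by
    funext x
    show ι 0 (m 0 x (inv 0 h)) = ι 0 x * (ι 0 h)⁻¹
    rw [hιhom 0, hpinv]
  have hmr : MDifferentiableAt 𝓘(ℝ, E) 𝓘(ℝ, E) (fun z : G => z * (ι 0 h)⁻¹) (ι 0 h) :=
    (contMDiff_mul_right (n := (⊤ : ℕ∞))).mdifferentiableAt (by simp)
  have hW : (mfderiv 𝓘(ℝ, F) 𝓘(ℝ, E) (ι 0) e) ((mfderiv 𝓘(ℝ, F) 𝓘(ℝ, F) (fun x => m 0 x (inv 0 h)) h) ((mfderiv 𝓘(ℝ, ℝ) 𝓘(ℝ, F) (fun ε => Fam ε h) 0) (1 : ℝ))) = @id E ((mfderiv 𝓘(ℝ, E) 𝓘(ℝ, E) (fun x => x * (ι 0 h)⁻¹) (ι 0 h)) (@id E ((mfderiv 𝓘(ℝ, F) 𝓘(ℝ, E) (ι 0) h) ((mfderiv 𝓘(ℝ, ℝ) 𝓘(ℝ, F) (fun ε => Fam ε h) 0) (1 : ℝ))))) := by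
    calc @id E ((mfderiv 𝓘(ℝ, F) 𝓘(ℝ, E) (ι 0) e) ((mfderiv 𝓘(ℝ, F) 𝓘(ℝ, F) (fun x => m 0 x (inv 0 h)) h) ((mfderiv 𝓘(ℝ, ℝ) 𝓘(ℝ, F) (fun ε => Fam ε h) 0) (1 : ℝ))))
        = @id E ((mfderiv 𝓘(ℝ, F) 𝓘(ℝ, E) (ι 0) (m 0 h (inv 0 h))) ((mfderiv 𝓘(ℝ, F) 𝓘(ℝ, F) (fun x => m 0 x (inv 0 h)) h) ((mfderiv 𝓘(ℝ, ℝ) 𝓘(ℝ, F) (fun ε => Fam ε h) 0) (1 : ℝ)))) :=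
          mfderiv_point_congr' (ι 0) e (m 0 h (inv 0 h)) hrinv.symm _
      _ = @id E ((mfderiv 𝓘(ℝ, F) 𝓘(ℝ, E) ((ι 0) ∘ (fun x : H => m 0 x (inv 0 h))) h)
            ((mfderiv 𝓘(ℝ, ℝ) 𝓘(ℝ, F) (fun ε => Fam ε h) 0) (1 : ℝ))) :=
          (congrArg (fun L => L ((mfderiv 𝓘(ℝ, ℝ) 𝓘(ℝ, F) (fun ε => Fam ε h) 0) (1 : ℝ)))
            (mfderiv_comp h (hι0d _) hρd)).symm
      _ = @id E ((mfderiv 𝓘(ℝ, F) 𝓘(ℝ, E) (fun x : H => ι 0 x * (ι 0 h)⁻¹) h)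
            ((mfderiv 𝓘(ℝ, ℝ) 𝓘(ℝ, F) (fun ε => Fam ε h) 0) (1 : ℝ))) := by rw [hcompfun]
      _ = @id E ((mfderiv 𝓘(ℝ, F) 𝓘(ℝ, E) ((fun z : G => z * (ι 0 h)⁻¹) ∘ (ι 0)) h)
            ((mfderiv 𝓘(ℝ, ℝ) 𝓘(ℝ, F) (fun ε => Fam ε h) 0) (1 : ℝ))) := rfl
      _ = @id E ((mfderiv 𝓘(ℝ, E) 𝓘(ℝ, E) (fun x => x * (ι 0 h)⁻¹) (ι 0 h)) (@id E ((mfderiv 𝓘(ℝ, F) 𝓘(ℝ, E) (ι 0) h) ((mfderiv 𝓘(ℝ, ℝ) 𝓘(ℝ, F) (fun ε => Fam ε h) 0) (1 : ℝ))))) :=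
          congrArg (fun L => L ((mfderiv 𝓘(ℝ, ℝ) 𝓘(ℝ, F) (fun ε => Fam ε h) 0) (1 : ℝ)))
            (mfderiv_comp h hmr (hι0d h))
  -- conclusion
  rw [h𝔥]
  refine ⟨(mfderiv 𝓘(ℝ, F) 𝓘(ℝ, F) (fun x => m 0 x (inv 0 h)) h) ((mfderiv 𝓘(ℝ, ℝ) 𝓘(ℝ, F) (fun ε => Fam ε h) 0) (1 : ℝ)), ?_⟩
  rw [hX h, hX' h, hu₀, ← hι0]
  calc @id E ((mfderiv 𝓘(ℝ, F) 𝓘(ℝ, E) (ι 0) e) ((mfderiv 𝓘(ℝ, F) 𝓘(ℝ, F) (fun x => m 0 x (inv 0 h)) h) ((mfderiv 𝓘(ℝ, ℝ) 𝓘(ℝ, F) (fun ε => Fam ε h) 0) (1 : ℝ))))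
      = @id E ((mfderiv 𝓘(ℝ, E) 𝓘(ℝ, E) (fun x => x * (ι 0 h)⁻¹) (ι 0 h)) (@id E ((mfderiv 𝓘(ℝ, F) 𝓘(ℝ, E) (ι 0) h) ((mfderiv 𝓘(ℝ, ℝ) 𝓘(ℝ, F) (fun ε => Fam ε h) 0) (1 : ℝ))))) := hW
    _ = (@id E ((mfderiv 𝓘(ℝ, E) 𝓘(ℝ, E) (fun x => x * (ι 0 h)⁻¹) (ι 0 h)) (@id E ((mfderiv 𝓘(ℝ, ℝ) 𝓘(ℝ, E) (fun ε => ι ε h) 0) (1 : ℝ)))) + @id E ((mfderiv 𝓘(ℝ, E) 𝓘(ℝ, E) (fun x => x * (ι 0 h)⁻¹) (ι 0 h)) (@id E ((mfderiv 𝓘(ℝ, F) 𝓘(ℝ, E) (ι 0) h) ((mfderiv 𝓘(ℝ, ℝ) 𝓘(ℝ, F) (fun ε => Fam ε h) 0) (1 : ℝ)))))) - @id E ((mfderiv 𝓘(ℝ, E) 𝓘(ℝ, E) (fun x => x * (ι 0 h)⁻¹) (ι 0 h)) (@id E ((mfderiv 𝓘(ℝ, ℝ) 𝓘(ℝ, E)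 (fun ε => ι ε h) 0) (1 : ℝ)))) := by abel
    _ = (@id E ((mfderiv 𝓘(ℝ, E) 𝓘(ℝ, E) (fun x => x * (ι 0 h)⁻¹) (ι 0 h)) (@id E ((mfderiv 𝓘(ℝ, E) 𝓘(ℝ, E) (fun x => x * ι 0 h) 1) ((mfderiv 𝓘(ℝ, ℝ) 𝓘(ℝ, E) g 0) (1 : ℝ))))) + @id E ((mfderiv 𝓘(ℝ, E) 𝓘(ℝ, E) (fun x => x * (ι 0 h)⁻¹) (ι 0 h)) (@id E ((mfderiv 𝓘(ℝ, ℝ) 𝓘(ℝ, E) (fun ε => ι' ε h) 0) (1 : ℝ)))) + -(@id E ((mfderiv 𝓘(ℝ, E) 𝓘(ℝ, E) (fun x => x * (ι 0 h)⁻¹) (ι 0 h)) (@id E ((mfderiv 𝓘(ℝ, E) 𝓘(ℝ, E) (fun x => ι 0 h * x) (1:G)) ((mfderiv 𝓘(ℝ, ℝ) 𝓘(ℝ, E) g 0) (1 : ℝ))))))) - @id E ((mfderiv 𝓘(ℝ, E) 𝓘(ℝ, E) (fun x => x * (ι 0 h)⁻¹) (ι 0 h)) (@id E ((mfderiv 𝓘(ℝ,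 ℝ) 𝓘(ℝ, E) (fun ε => ι ε h) 0) (1 : ℝ)))) := by rw [expand]
    _ = (@id E ((mfderiv 𝓘(ℝ, ℝ) 𝓘(ℝ, E) g 0) (1 : ℝ)) + @id E ((mfderiv 𝓘(ℝ, E) 𝓘(ℝ, E) (fun x => x * (ι 0 h)⁻¹) (ι 0 h)) (@id E ((mfderiv 𝓘(ℝ, ℝ) 𝓘(ℝ, E) (fun ε => ι' ε h) 0) (1 : ℝ)))) + -(Ad (ι 0 h) (@id E ((mfderiv 𝓘(ℝ, ℝ) 𝓘(ℝ, E) g 0) (1 : ℝ))))) - @id E ((mfderiv 𝓘(ℝ, E) 𝓘(ℝ, E) (fun x => x * (ι 0 h)⁻¹) (ι 0 h)) (@id E ((mfderiv 𝓘(ℝ, ℝ) 𝓘(ℝ, E) (fun ε => ι ε h) 0) (1 : ℝ)))) := by rw [i1, i2]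
    _ = @id E ((mfderiv 𝓘(ℝ, E) 𝓘(ℝ, E) (fun x => x * (ι 0 h)⁻¹) (ι 0 h)) (@id E ((mfderiv 𝓘(ℝ, ℝ) 𝓘(ℝ, E) (fun ε => ι' ε h) 0) (1 : ℝ)))) - @id E ((mfderiv 𝓘(ℝ, E) 𝓘(ℝ, E) (fun x => x * (ι 0 h)⁻¹) (ι 0 h)) (@id E ((mfderiv 𝓘(ℝ, ℝ) 𝓘(ℝ, E) (fun ε => ι ε h) 0) (1 : ℝ)))) - (Ad (ι 0 h) (@id E ((mfderiv 𝓘(ℝ, ℝ) 𝓘(ℝ, E) g 0) (1 : ℝ))) - @id E ((mfderiv 𝓘(ℝ, ℝ) 𝓘(ℝ, E) g 0) (1 : ℝ))) := by abel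
end
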